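/- Let (X,Y) be a pair of discrete random variables with joint pmf p_{X,Y}, marginal pmf p_X of X and conditional pmfs p_{Y|X=x}, and let (X̃,Ỹ) similarly have joint pmf p_{X̃,Ỹ}, marginal p_{X̃} and conditionals p_{Ỹ|X̃=x}. If p_X = p_{X̃} and p_{Y|X=x} is majorized by p_{Ỹ|X̃=x} for every x (p_{Y|X=x} ⪯ p_{Ỹ|X̃=x}), then p_{X,Y} is majorized by p_{X̃,Ỹ} (p_{X,Y} ⪯ p_{X̃,Ỹ}). -/

import Mathlib

open scoped ENNReal Classical
open Filter

namespace MEC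

/-- A probability mass function on `α`: (nonnegative) masses summing to `1`. -/
def IsPMF {α : Type*} (p : α → ℝ≥0∞) : Prop := ∑' x, p x = 1

/-- `p` is an aggregation of `q`, written `q ⊑ p`: there is a map `g` sending the support of
`q` into the support of `p` such that `p` is the pushforward of `q` under `g`. -/
def Agg {α β : Type*} (q : α → ℝ≥0∞) (p : β → ℝ≥0∞) : Prop :=
  ∃ g : α → β, (∀ x, q x ≠ 0 → p (g x) ≠ 0) ∧
    ∀ y, p y = ∑' x, if g x = y then q x else 0

/-- Sum of the `k` largest masses of `p`, i.e. `max_{A, |A| ≤ k} p(A)`. -/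
noncomputable def topk {α : Type*} (p : α → ℝ≥0∞) (k : ℕ) : ℝ≥0∞ :=
  ⨆ (A : Finset α) (_ : A.card ≤ k), ∑ x ∈ A, p x

/-- `q` is majorized by `p`, written `q ⪯ p`: for every `k`, the sum of the `k` largest
masses of `q` is at most the sum of the `k` largest masses of `p`. -/
def Majorized {α β : Type*} (q : α → ℝ≥0∞) (p : β → ℝ≥0∞) : Prop :=
  ∀ k : ℕ, topk q k ≤ topk p k

/-- Product pmf `(q × r)(x,z) = q(x) · r(z)`. -/
noncomputable def prodFun {α β : Type*} (q : α → ℝ≥0∞) (r : β → ℝ≥0∞) : α × β → ℝ≥0∞ :=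
  fun z => q z.1 * r z.2

/-- `Geom_{1/2}` on `ℕ+ = {1,2,3,...}`, with mass `2^{-x}` at `x`. -/
noncomputable def geomHalf : ℕ+ → ℝ≥0∞ := fun x => 2⁻¹ ^ (x : ℕ)

/-- Capped geometric distribution `CGeom_{1/2,k}` on `{1,...,k} ⊆ ℕ+`. -/
noncomputable def cgeomHalf (k : ℕ) : ℕ+ → ℝ≥0∞ := fun x =>
  if (x : ℕ) < k then 2⁻¹ ^ (x : ℕ) else if (x : ℕ) = k then 2⁻¹ ^ (k - 1) else 0

/-- `inf_{p ∈ S} max_{A ⊆ supp(p), |A| ≤ k} p(A)`. -/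
noncomputable def infTopk {α : Type*} (S : Set (α → ℝ≥0∞)) (k : ℕ) : ℝ≥0∞ :=
  ⨅ p ∈ S, topk p k

/-- The greatest lower bound `⋀S` of `S` with respect to majorization, as a pmf on
`ℕ+ = {1,2,...}`, with `(⋀S)(k) = inf_{p∈S} max_{|A|≤k} p(A) − inf_{p∈S} max_{|A|≤k−1} p(A)`. -/
noncomputable def glb {α : Type*} (S : Set (α → ℝ≥0∞)) : ℕ+ → ℝ≥0∞ :=
  fun k => infTopk S (k : ℕ) - infTopk S ((k : ℕ) - 1)

/-- Condition for the existence of `⋀S`: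
`lim_{k→∞} inf_{p∈S} max_{A⊆supp(p), |A|≤k} p(A) = 1`. -/
def GlbExists {α : Type*} (S : Set (α → ℝ≥0∞)) : Prop :=
  Tendsto (fun k => infTopk S k) atTop (nhds 1)

/-- Base-2 logarithm on `ℝ≥0∞` (intended for arguments in `[1,∞]`). -/
noncomputable def log2 (x : ℝ≥0∞) : ℝ≥0∞ :=
  if x = ∞ then ∞ else ENNReal.ofReal (Real.logb 2 x.toReal)

/-- Shannon entropy (base 2): `H(p) = Σ_x p(x) log₂ (1/p(x))`. -/
noncomputable def shannon {α : Type*} (p : α → ℝ≥0∞) : ℝ≥0∞ :=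
  ∑' x, p x * log2 (p x)⁻¹

/-- Rényi entropy of order `a ∈ [0,∞]` (base 2):
`H_a(p) = (1/(1−a)) log₂ Σ_{x ∈ supp(p)} p(x)^a` for `a ∉ {1,∞}` (for `a > 1` this is
written in the equivalent form `(1/(a−1)) log₂ (Σ_{x ∈ supp(p)} p(x)^a)⁻¹` so that it is
nonnegative), Shannon entropy for `a = 1`, and `−log₂ max_x p(x)` for `a = ∞`. -/
noncomputable def renyi {α : Type*} (p : α → ℝ≥0∞) (a : ℝ≥0∞) : ℝ≥0∞ :=
  if a = 1 then shannon p
  else if a = ∞ then log2 (⨆ x, p x)⁻¹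
  else if a < 1 then log2 (∑' x, if p x = 0 then 0 else p x ^ a.toReal) * (1 - a)⁻¹
  else log2 (∑' x, if p x = 0 then 0 else p x ^ a.toReal)⁻¹ * (a - 1)⁻¹

/-- `q ∈ Γ̃(S)`: `q` (a pmf over `ℕ`, without loss of generality) is an underlying
distribution of a coupling of `S`, i.e. `q ⊑ p` for every `p ∈ S`. -/
def UnderlyingCoupling {α : Type*} (S : Set (α → ℝ≥0∞)) (q : ℕ → ℝ≥0∞) : Prop :=
  IsPMF q ∧ ∀ p ∈ S, Agg q p

/-- `H*_a(S) = inf_{q ∈ Γ̃(S)} H_a(q)`, the minimum Rényi entropy of couplings of `S`. -/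
noncomputable def minRenyi {α : Type*} (S : Set (α → ℝ≥0∞)) (a : ℝ≥0∞) : ℝ≥0∞ :=
  ⨅ (q : ℕ → ℝ≥0∞) (_ : UnderlyingCoupling S q), renyi q a

/-- The marginal pmf of the first coordinate of a joint pmf. -/
noncomputable def marginalFst {α β : Type*} (p : α × β → ℝ≥0∞) : α → ℝ≥0∞ :=
  fun x => ∑' y, p (x, y)

/-- The conditional pmf `p_{Y|X=x}` of a joint pmf. -/
noncomputable def condSnd {α β : Type*} (p : α × β → ℝ≥0∞) (x : α) : β → ℝ≥0∞ :=
  fun y => p (x, y) / marginalFst p x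


private lemma sum_le_topk {α : Type*} (p : α → ℝ≥0∞) {k : ℕ} {B : Finset α}
    (hB : B.card ≤ k) : ∑ x ∈ B, p x ≤ topk p k :=
  le_iSup_of_le B (le_iSup_of_le hB le_rfl)

private lemma exists_near_topk {β : Type*} (p : β → ℝ≥0∞) (k : ℕ)
    (hfin : topk p k ≠ ∞) {ε : ℝ≥0∞} (hε : ε ≠ 0) :
    ∃ B : Finset β, B.card ≤ k ∧ topk p k ≤ ∑ y ∈ B, p y + ε := by
  by_cases h : topk p k ≤ ε
  · exact ⟨∅, Nat.zero_le _, by simpa using h⟩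
  · push_neg at h
    have h0 : topk p k ≠ 0 := ((zero_le : (0 : ℝ≥0∞) ≤ ε).trans_lt h).ne'
    have h2 : topk p k - ε < topk p k := ENNReal.sub_lt_self hfin h0 hε
    rw [topk, lt_iSup_iff] at h2
    obtain ⟨B, hB⟩ := h2
    rw [lt_iSup_iff] at hB
    obtain ⟨hcard, hlt⟩ := hB
    exact ⟨B, hcard, tsub_le_iff_right.mp hlt.le⟩

/-- Proposition 2, majorization part: if `p_X = p_X̃` and
`p_{Y|X=x} ⪯ p_{Ỹ|X̃=x}` for all `x` (in the support), then `p_{X,Y} ⪯ p_{X̃,Ỹ}`. -/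
theorem joint_majorized_of_cond_majorized {α β β' : Type*}
    [Countable α] [Countable β] [Countable β']
    (pXY : α × β → ℝ≥0∞) (pXY' : α × β' → ℝ≥0∞)
    (hXY : IsPMF pXY) (hXY' : IsPMF pXY')
    (hmarg : marginalFst pXY = marginalFst pXY')
    (hcond : ∀ x, marginalFst pXY x ≠ 0 → Majorized (condSnd pXY x) (condSnd pXY' x)) :
    Majorized pXY pXY' := by
  classical
  intro k
  refine iSup_le fun A => iSup_le fun hA => ?_
  set px := marginalFst pXY with hpx
  have htot : ∑' x, px x = 1 := by
    rw [← hXY, ENNReal.tsum_prod']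
    rfl
  have hxle1 : ∀ x, px x ≤ 1 := fun x => htot ▸ ENNReal.le_tsum x
  have hxfin : ∀ x, px x ≠ ∞ := fun x =>
    ((hxle1 x).trans_lt (by norm_num)).ne
  have hple : ∀ x y, pXY (x, y) ≤ px x := fun x y => ENNReal.le_tsum y
  have hmx' : ∀ x, marginalFst pXY' x = px x := fun x => (congrFun hmarg x).symm
  have htopfin : topk pXY' k ≠ ∞ := by
    have h1 : topk pXY' k ≤ 1 := iSup_le fun B => iSup_le fun _ =>
      hXY' ▸ ENNReal.sum_le_tsum B
    exact (h1.trans_lt (by norm_num)).ne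
  apply ENNReal.le_of_forall_pos_le_add
  intro ε hε _
  have hε' : (ε : ℝ≥0∞) ≠ 0 := by exact_mod_cast hε.ne'
  set T : Finset α := (A.image Prod.fst).filter (fun x => px x ≠ 0) with hT
  set Ax : α → Finset β := fun x => ((A.filter (fun z => z.1 = x)).image Prod.snd)
    with hAx
  -- Step A : group the sum by first coordinate
  have stepA : ∑ z ∈ A, pXY z = ∑ x ∈ T, ∑ y ∈ Ax x, pXY (x, y) := by
    rw [← Finset.sum_fiberwise_of_maps_to (g := Prod.fst) (t := A.image Prod.fst)
      (fun z hz => Finset.mem_image_of_mem _ hz) pXY]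
    rw [hT, Finset.sum_filter_of_ne]
    · refine Finset.sum_congr rfl fun x _ => ?_
      rw [hAx]
      rw [Finset.sum_image (fun z hz z' hz' hzz => Prod.ext
        (((Finset.mem_filter.mp hz).2).trans ((Finset.mem_filter.mp hz').2).symm) hzz)]
      refine Finset.sum_congr rfl fun z hz => ?_
      have h1 := (Finset.mem_filter.mp hz).2
      rw [← h1]
    · intro x _ hne hx0
      apply hne
      refine Finset.sum_eq_zero fun y _ => ?_
      simpa [hx0] using hple x y
  -- cardinality bookkeeping
  have hkx : ∑ x ∈ T, (Ax x).card ≤ k := by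
    calc ∑ x ∈ T, (Ax x).card
        ≤ ∑ x ∈ T, (A.filter (fun z => z.1 = x)).card :=
          Finset.sum_le_sum fun x _ => Finset.card_image_le
      _ ≤ ∑ x ∈ A.image Prod.fst, (A.filter (fun z => z.1 = x)).card :=
          Finset.sum_le_sum_of_subset (Finset.filter_subset _ _)
      _ = A.card :=
          (Finset.card_eq_sum_card_fiberwise fun z hz =>
            Finset.mem_image_of_mem _ hz).symm
      _ ≤ k := hA
  -- finiteness of topk of conditionals
  have hcondfin : ∀ x, px x ≠ 0 → ∀ j, topk (condSnd pXY' x) j ≠ ∞ := by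
    intro x hx0 j
    have h1 : topk (condSnd pXY' x) j ≤ 1 := by
      refine iSup_le fun B => iSup_le fun _ => ?_
      have h2 : ∑ y ∈ B, condSnd pXY' x y = (∑ y ∈ B, pXY' (x, y)) / px x := by
        simp only [condSnd, hmx', div_eq_mul_inv, Finset.sum_mul]
      rw [h2]
      have h3 : ∑ y ∈ B, pXY' (x, y) ≤ px x := by
        rw [← hmx' x]
        exact ENNReal.sum_le_tsum B
      calc (∑ y ∈ B, pXY' (x, y)) / px x ≤ px x / px x :=
            ENNReal.div_le_div_right h3 _
        _ = 1 := ENNReal.div_self hx0 (hxfin x)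
    exact (h1.trans_lt (by norm_num)).ne
  -- choose near-optimal sets for the conditionals of pXY'
  have hchoice : ∀ x ∈ T, ∃ B : Finset β', B.card ≤ (Ax x).card ∧
      topk (condSnd pXY' x) (Ax x).card ≤ ∑ y ∈ B, condSnd pXY' x y + ε := by
    intro x hx
    have hx0 : px x ≠ 0 := (Finset.mem_filter.mp hx).2
    exact exists_near_topk _ _ (hcondfin x hx0 _) hε'
  choose! Bf hB1 hB2 using hchoice
  -- the competitor set for pXY'
  set U : Finset (α × β') := T.biUnion (fun x => (Bf x).image (fun y => (x, y)))
    with hU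
  have hUcard : U.card ≤ k := by
    calc U.card ≤ ∑ x ∈ T, ((Bf x).image (fun y => (x, y))).card :=
          Finset.card_biUnion_le
      _ ≤ ∑ x ∈ T, (Ax x).card :=
          Finset.sum_le_sum fun x hx => Finset.card_image_le.trans (hB1 x hx)
      _ ≤ k := hkx
  have hUsum : ∑ x ∈ T, ∑ y ∈ Bf x, pXY' (x, y) = ∑ z ∈ U, pXY' z := by
    rw [hU, Finset.sum_biUnion]
    · refine Finset.sum_congr rfl fun x _ => ?_
      rw [Finset.sum_image (fun y _ y' _ h => (Prod.mk.injEq _ _ _ _ ▸ h).2)]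
    · intro x _ x' _ hxx
      simp only [Finset.disjoint_left]
      intro z hz hz'
      simp only [Finset.mem_coe, Finset.mem_image] at hz hz'
      obtain ⟨y, _, rfl⟩ := hz
      obtain ⟨y', _, h⟩ := hz'
      exact hxx (congrArg Prod.fst h).symm
  -- main chain
  calc ∑ z ∈ A, pXY z
      = ∑ x ∈ T, ∑ y ∈ Ax x, pXY (x, y) := stepA
    _ = ∑ x ∈ T, px x * ∑ y ∈ Ax x, condSnd pXY x y := by
        refine Finset.sum_congr rfl fun x hx => ?_
        have hx0 : px x ≠ 0 := (Finset.mem_filter.mp hx).2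
        rw [Finset.mul_sum]
        refine Finset.sum_congr rfl fun y _ => ?_
        rw [condSnd, ← hpx, ENNReal.mul_div_cancel hx0 (hxfin x)]
    _ ≤ ∑ x ∈ T, px x * (∑ y ∈ Bf x, condSnd pXY' x y + ε) := by
        refine Finset.sum_le_sum fun x hx => ?_
        have hx0 : px x ≠ 0 := (Finset.mem_filter.mp hx).2
        refine mul_le_mul_right ?_ _
        calc ∑ y ∈ Ax x, condSnd pXY x y
            ≤ topk (condSnd pXY x) (Ax x).card := sum_le_topk _ le_rfl
          _ ≤ topk (condSnd pXY' x) (Ax x).card := hcond x hx0 _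
          _ ≤ ∑ y ∈ Bf x, condSnd pXY' x y + ε := hB2 x hx
    _ = ∑ x ∈ T, ∑ y ∈ Bf x, pXY' (x, y) + ∑ x ∈ T, px x * ε := by
        rw [← Finset.sum_add_distrib]
        refine Finset.sum_congr rfl fun x hx => ?_
        have hx0 : px x ≠ 0 := (Finset.mem_filter.mp hx).2
        rw [mul_add]
        congr 1
        rw [Finset.mul_sum]
        refine Finset.sum_congr rfl fun y _ => ?_
        rw [condSnd, hmx', ENNReal.mul_div_cancel hx0 (hxfin x)]
    _ ≤ topk pXY' k + ε := by
        refine add_le_add ?_ ?_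
        · rw [hUsum]
          exact sum_le_topk _ hUcard
        · calc ∑ x ∈ T, px x * ε = (∑ x ∈ T, px x) * ε := by rw [Finset.sum_mul]
            _ ≤ 1 * ε := mul_le_mul_left (htot ▸ ENNReal.sum_le_tsum T) _
            _ = ε := one_mul _


end MEC
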